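/- arXiv:1010.6279 — 2 statements merged into one kernel-verified Lean document; each statement's English description precedes it below -/
import Mathlib

section
/- Let K_1, ..., K_d be a well separated family of convex bodies in R^d, let a_i ∈ K_i and b_i ∈ K_i for each i, and suppose all points a_1, ..., a_d, b_1, ..., b_d lie on a common hyperplane H. Then the unit normal vector v(a_1, ..., a_d) determined by the orientation condition det[(v, 0); (a_1, 1); ...; (a_d, 1)] > 0 equals v(b_1, ..., b_d). -/
open Set

/-- The `(d+1) × (d+1)` matrix whose columns are `(v, 0), (a 0, 1), …, (a (d-1), 1)`. -/
noncomputable def liftedMat (d : ℕ) (v : EuclideanSpace ℝ (Fin d))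
    (a : Fin d → EuclideanSpace ℝ (Fin d)) : Matrix (Fin (d + 1)) (Fin (d + 1)) ℝ :=
  Matrix.of fun i j =>
    Fin.lastCases (Fin.cases (0 : ℝ) (fun _ => (1 : ℝ)) j)
      (fun i' => Fin.cases (v i') (fun j' => a j' i') j) i

/-- `v` is the orientation-normalized unit normal to the affine hull of `a 0, …, a (d-1)`:
it is a unit vector, orthogonal to all differences of the points, and the simplex with
vertices `v + a 0, a 0, …, a (d-1)` is positively oriented. -/
noncomputable def OrientedNormal (d : ℕ) (v : EuclideanSpace ℝ (Fin d))
    (a : Fin d → EuclideanSpace ℝ (Fin d)) : Prop :=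
  ‖v‖ = 1 ∧ (∀ i j, (inner ℝ (a i - a j) v : ℝ) = 0) ∧ 0 < (liftedMat d v a).det

/-- The family `K` is well separated: any points chosen from the convex hulls of at most
`d + 1` of the members are affinely independent. -/
def WellSeparated (d : ℕ) {n : ℕ} (K : Fin n → Set (EuclideanSpace ℝ (Fin d))) : Prop :=
  ∀ s : Finset (Fin n), s.card ≤ d + 1 →
    ∀ x : Fin n → EuclideanSpace ℝ (Fin d),
      (∀ i ∈ s, x i ∈ convexHull ℝ (K i)) →
      AffineIndependent ℝ (fun i : s => x i)

lemma liftedMat_det_ne_zero {d : ℕ} {v : EuclideanSpace ℝ (Fin d)} (hv : v ≠ 0)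
    {x : Fin d → EuclideanSpace ℝ (Fin d)} (hx : AffineIndependent ℝ x)
    (horth : ∀ i j, (inner ℝ (x i - x j) v : ℝ) = 0) :
    (liftedMat d v x).det ≠ 0 := by
  cases d with
  | zero => exact absurd (PiLp.ext fun i => i.elim0 : v = 0) hv
  | succ n =>
    intro hdet
    obtain ⟨g, hg, hmul⟩ := Matrix.exists_mulVec_eq_zero_iff.mpr hdet
    have hlast : ∑ j' : Fin (n+1), g j'.succ = 0 := by
      have h := congrFun hmul (Fin.last (n+1))
      simp only [Matrix.mulVec, dotProduct, liftedMat, Matrix.of_apply,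
        Fin.lastCases_last, Pi.zero_apply] at h
      rw [Fin.sum_univ_succ] at h
      simpa using h
    have hrow : ∀ i' : Fin (n+1),
        v i' * g 0 + ∑ j' : Fin (n+1), x j' i' * g j'.succ = 0 := by
      intro i'
      have h := congrFun hmul (Fin.castSucc i')
      simp only [Matrix.mulVec, dotProduct, liftedMat, Matrix.of_apply,
        Fin.lastCases_castSucc, Pi.zero_apply] at h
      rw [Fin.sum_univ_succ] at h
      simpa using h
    have hy : g 0 • v + ∑ j' : Fin (n+1), g j'.succ • x j' = 0 := by
      ext i'
      have h := hrow i'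
      simp only [PiLp.add_apply, PiLp.smul_apply, smul_eq_mul]
      rw [WithLp.ofLp_sum, Finset.sum_apply]
      simp only [PiLp.smul_apply, smul_eq_mul]
      rw [show (0 : EuclideanSpace ℝ (Fin (n+1))) i' = 0 from rfl]
      have : ∑ j' : Fin (n+1), g j'.succ * x j' i' = ∑ j' : Fin (n+1), x j' i' * g j'.succ := by
        exact Finset.sum_congr rfl fun j' _ => mul_comm _ _
      rw [this]; linarith
    have hinner := congrArg (fun z : EuclideanSpace ℝ (Fin (n+1)) => (inner ℝ z v : ℝ)) hy
    simp only [inner_add_left, sum_inner, real_inner_smul_left, inner_zero_left] at hinner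
    have hconst : ∀ j' : Fin (n+1), (inner ℝ (x j') v : ℝ) = (inner ℝ (x 0) v : ℝ) := by
      intro j'
      have h := horth j' 0
      rw [inner_sub_left] at h
      linarith
    have hsum0 : ∑ j' : Fin (n+1), g j'.succ * (inner ℝ (x j') v : ℝ) = 0 := by
      calc ∑ j' : Fin (n+1), g j'.succ * (inner ℝ (x j') v : ℝ)
          = ∑ j' : Fin (n+1), g j'.succ * (inner ℝ (x 0) v : ℝ) :=
            Finset.sum_congr rfl fun j' _ => by rw [hconst j']
        _ = (∑ j' : Fin (n+1), g j'.succ) * (inner ℝ (x 0) v : ℝ) := by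
            rw [Finset.sum_mul]
        _ = 0 := by rw [hlast, zero_mul]
    have hg0 : g 0 = 0 := by
      have hvv : (inner ℝ v v : ℝ) = ‖v‖ ^ 2 := real_inner_self_eq_norm_sq v
      have hvpos : (0:ℝ) < ‖v‖ ^ 2 := pow_pos (norm_pos_iff.mpr hv) 2
      rw [hsum0, add_zero] at hinner
      have := mul_eq_zero.mp hinner
      rcases this with h | h
      · exact h
      · rw [hvv] at h; exact absurd h (ne_of_gt hvpos)
    rw [hg0, zero_smul, zero_add] at hy
    have hzero := affineIndependent_iff.mp hx Finset.univ (fun j' => g j'.succ) hlast hy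
    apply hg
    funext j
    refine Fin.cases hg0 (fun j' => hzero j' (Finset.mem_univ _)) j

lemma normal_multiple {d : ℕ} (hd : 0 < d) {a : Fin d → EuclideanSpace ℝ (Fin d)}
    (hA : AffineIndependent ℝ a) {w : EuclideanSpace ℝ (Fin d)} (hw : w ≠ 0)
    (hwo : ∀ i j, (inner ℝ (a i - a j) w : ℝ) = 0)
    (z : EuclideanSpace ℝ (Fin d)) (hzo : ∀ i j, (inner ℝ (a i - a j) z : ℝ) = 0) :
    ∃ r : ℝ, z = r • w := by
  have hmem : ∀ y : EuclideanSpace ℝ (Fin d),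
      (∀ i j, (inner ℝ (a i - a j) y : ℝ) = 0) → y ∈ (vectorSpan ℝ (Set.range a))ᗮ := by
    intro y hy
    rw [Submodule.mem_orthogonal]
    intro t ht
    rw [vectorSpan_def] at ht
    induction ht using Submodule.span_induction with
    | mem t ht =>
      obtain ⟨p, hp, q, hq, rfl⟩ := ht
      obtain ⟨i, rfl⟩ := hp
      obtain ⟨j, rfl⟩ := hq
      exact hy i j
    | zero => exact inner_zero_left y
    | add t s _ _ h1 h2 => rw [inner_add_left, h1, h2, add_zero]
    | smul c t _ h1 => rw [real_inner_smul_left, h1, mul_zero]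
  have h1 : Module.finrank ℝ (vectorSpan ℝ (Set.range a)) = d - 1 :=
    hA.finrank_vectorSpan (by simp [Nat.sub_add_cancel hd])
  have h2 : Module.finrank ℝ ((vectorSpan ℝ (Set.range a))ᗮ) = 1 := by
    have h3 := Submodule.finrank_add_finrank_orthogonal (vectorSpan ℝ (Set.range a))
    rw [h1, finrank_euclideanSpace_fin] at h3
    omega
  have hwS : w ∈ (vectorSpan ℝ (Set.range a))ᗮ := hmem w hwo
  have hzS : z ∈ (vectorSpan ℝ (Set.range a))ᗮ := hmem z hzo
  have hwne : (⟨w, hwS⟩ : (vectorSpan ℝ (Set.range a))ᗮ) ≠ 0 := fun h => hw (by simpa using congrArg Subtype.val h)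
  obtain ⟨r, hr⟩ := (finrank_eq_one_iff_of_nonzero' (⟨w, hwS⟩ : (vectorSpan ℝ (Set.range a))ᗮ) hwne).mp h2 ⟨z, hzS⟩
  exact ⟨r, by simpa using (congrArg Subtype.val hr).symm⟩

lemma liftedMat_neg (d : ℕ) (v : EuclideanSpace ℝ (Fin d))
    (b : Fin d → EuclideanSpace ℝ (Fin d)) :
    (liftedMat d (-v) b).det = -(liftedMat d v b).det := by
  have heq : liftedMat d (-v) b =
      (liftedMat d v b).updateCol 0 ((-1 : ℝ) • fun i => liftedMat d v b i 0) := by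
    funext i j
    induction j using Fin.cases with
    | zero =>
      induction i using Fin.lastCases with
      | last => simp [liftedMat, Matrix.updateCol_apply]
      | cast i' => simp [liftedMat, Matrix.updateCol_apply]
    | succ j' =>
      simp [liftedMat, Matrix.updateCol_apply, Fin.succ_ne_zero]
  rw [heq, Matrix.det_updateCol_smul]
  rw [show (fun i => liftedMat d v b i 0) = fun i => liftedMat d v b i 0 from rfl]
  rw [Matrix.updateCol_eq_self]
  ring

lemma affine_of_ws {d n : ℕ} {K : Fin n → Set (EuclideanSpace ℝ (Fin d))}
    (hws : ∀ s : Finset (Fin n), s.card ≤ d + 1 →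
      ∀ x : Fin n → EuclideanSpace ℝ (Fin d),
        (∀ i ∈ s, x i ∈ convexHull ℝ (K i)) →
        AffineIndependent ℝ (fun i : s => x i))
    (hn : n ≤ d + 1) (x : Fin n → EuclideanSpace ℝ (Fin d))
    (hx : ∀ i, x i ∈ convexHull ℝ (K i)) : AffineIndependent ℝ x := by
  have h := hws Finset.univ (by simpa using hn) x (fun i _ => hx i)
  exact (affineIndependent_equiv
    (Equiv.subtypeUnivEquiv (fun i : Fin n => Finset.mem_univ i))).mp (by exact h)

theorem stmt1 (d : ℕ) (K : Fin d → Set (EuclideanSpace ℝ (Fin d)))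
    (hbody : ∀ i, IsCompact (K i) ∧ Convex ℝ (K i) ∧ (interior (K i)).Nonempty)
    (hws : WellSeparated d K)
    (a b : Fin d → EuclideanSpace ℝ (Fin d))
    (ha : ∀ i, a i ∈ K i) (hb : ∀ i, b i ∈ K i)
    (w : EuclideanSpace ℝ (Fin d)) (c : ℝ) (hw : w ≠ 0)
    (hplane : ∀ i, (inner ℝ (a i) w : ℝ) = c ∧ (inner ℝ (b i) w : ℝ) = c)
    (v u : EuclideanSpace ℝ (Fin d))
    (hv : OrientedNormal d v a) (hu : OrientedNormal d u b) : v = u := by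
  obtain ⟨hv1, hv2, hv3⟩ := hv
  obtain ⟨hu1, hu2, hu3⟩ := hu
  rcases Nat.eq_zero_or_pos d with hd | hd
  · subst hd; exact PiLp.ext fun i => i.elim0
  have hKa : ∀ i, a i ∈ convexHull ℝ (K i) := fun i => subset_convexHull ℝ _ (ha i)
  have hKb : ∀ i, b i ∈ convexHull ℝ (K i) := fun i => subset_convexHull ℝ _ (hb i)
  have hAa : AffineIndependent ℝ a := affine_of_ws hws (by omega) a hKa
  have hAb : AffineIndependent ℝ b := affine_of_ws hws (by omega) b hKb
  have hwa : ∀ i j, (inner ℝ (a i - a j) w : ℝ) = 0 := fun i j => by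
    rw [inner_sub_left, (hplane i).1, (hplane j).1, sub_self]
  have hwb : ∀ i j, (inner ℝ (b i - b j) w : ℝ) = 0 := fun i j => by
    rw [inner_sub_left, (hplane i).2, (hplane j).2, sub_self]
  obtain ⟨r, hr⟩ := normal_multiple hd hAa hw hwa v hv2
  obtain ⟨σ, hσ⟩ := normal_multiple hd hAb hw hwb u hu2
  have hwn : ‖w‖ ≠ 0 := norm_ne_zero_iff.mpr hw
  have hrabs : |r| * ‖w‖ = 1 := by
    rw [← Real.norm_eq_abs, ← norm_smul, ← hr, hv1]
  have hsabs : |σ| * ‖w‖ = 1 := by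
    rw [← Real.norm_eq_abs, ← norm_smul, ← hσ, hu1]
  have habs : |r| = |σ| := by
    have := hrabs.trans hsabs.symm
    exact mul_right_cancel₀ hwn this
  rcases abs_eq_abs.mp habs with h | h
  · rw [hr, hσ, h]
  · exfalso
    have hvu : v = -u := by rw [hr, hσ, h, neg_smul]
    set x : ℝ → Fin d → EuclideanSpace ℝ (Fin d) := fun t i => (1 - t) • a i + t • b i
      with hxdef
    have hx0 : x 0 = a := funext fun i => by simp [hxdef]
    have hx1 : x 1 = b := funext fun i => by simp [hxdef]
    have hf0 : 0 < (liftedMat d v (x 0)).det := by rw [hx0]; exact hv3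
    have hf1 : (liftedMat d v (x 1)).det < 0 := by
      rw [hx1, hvu, liftedMat_neg]; linarith
    have hcont : Continuous fun t => (liftedMat d v (x t)).det := by
      apply Continuous.matrix_det
      apply continuous_matrix
      intro i j
      induction i using Fin.lastCases with
      | last =>
        simp only [liftedMat, Matrix.of_apply, Fin.lastCases_last]
        exact continuous_const
      | cast i' =>
        induction j using Fin.cases with
        | zero =>
          simp only [liftedMat, Matrix.of_apply, Fin.lastCases_castSucc, Fin.cases_zero]
          exact continuous_const
        | succ j' =>
          simp only [liftedMat, Matrix.of_apply, Fin.lastCases_castSucc, Fin.cases_succ, hxdef]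
          have heq : (fun t : ℝ => ((1 - t) • a j' + t • b j') i')
              = fun t : ℝ => (1 - t) * a j' i' + t * b j' i' := by
            funext t
            simp [PiLp.add_apply, PiLp.smul_apply, smul_eq_mul]
          rw [heq]
          fun_prop
    obtain ⟨t, ht, hft⟩ := intermediate_value_Icc' (by norm_num : (0:ℝ) ≤ 1)
      hcont.continuousOn ⟨le_of_lt hf1, le_of_lt hf0⟩
    have hxK : ∀ i, x t i ∈ convexHull ℝ (K i) := fun i =>
      (convex_convexHull ℝ (K i)) (hKa i) (hKb i) (by linarith [ht.2]) ht.1 (by ring)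
    have hAx : AffineIndependent ℝ (x t) := affine_of_ws hws (by omega) _ hxK
    have hvne : v ≠ 0 := fun h => by rw [h, norm_zero] at hv1; exact zero_ne_one hv1
    have hcw : ∀ i, (inner ℝ (x t i) w : ℝ) = c := by
      intro i
      simp only [hxdef]
      rw [inner_add_left, real_inner_smul_left, real_inner_smul_left,
        (hplane i).1, (hplane i).2]
      ring
    have hxo : ∀ i j, (inner ℝ (x t i - x t j) v : ℝ) = 0 := by
      intro i j
      rw [hr, real_inner_smul_right, inner_sub_left, hcw i, hcw j]
      ring
    exact liftedMat_det_ne_zero hvne hAx hxo hft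
end

section
/- Let K_1, ..., K_d be a well separated family of convex bodies in R^d. For any two choices of points a_i ∈ K_i and b_i ∈ K_i (i = 1, ..., d), the oriented unit normals satisfy v(a_1, ..., a_d) ≠ -v(b_1, ..., b_d). -/
open Set

theorem stmt2 (d : ℕ) (K : Fin d → Set (EuclideanSpace ℝ (Fin d)))
    (hbody : ∀ i, IsCompact (K i) ∧ Convex ℝ (K i) ∧ (interior (K i)).Nonempty)
    (hws : WellSeparated d K)
    (a b : Fin d → EuclideanSpace ℝ (Fin d))
    (ha : ∀ i, a i ∈ K i) (hb : ∀ i, b i ∈ K i)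
    (v u : EuclideanSpace ℝ (Fin d))
    (hv : OrientedNormal d v a) (hu : OrientedNormal d u b) : v ≠ -u := by
  intro hvu
  obtain ⟨hv1, hv2, hv3⟩ := hv
  obtain ⟨hu1, hu2, hu3⟩ := hu
  rcases Nat.eq_zero_or_pos d with hd | hd
  · subst hd
    have hv0 : v = 0 := Subsingleton.elim v 0
    rw [hv0, norm_zero] at hv1
    exact zero_ne_one hv1
  haveI : NeZero d := ⟨hd.ne'⟩
  set c : ℝ → Fin d → EuclideanSpace ℝ (Fin d) := fun t i => (1 - t) • a i + t • b i with hc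
  -- endpoints
  have hc0 : c 0 = a := by funext i; simp [hc]
  have hc1 : c 1 = b := by funext i; simp [hc]
  -- det at 1 is negative
  have hneg : (liftedMat d v b).det = - (liftedMat d u b).det := by
    have h1 : liftedMat d v b
        = (liftedMat d u b).updateCol 0 ((-1 : ℝ) • fun i => liftedMat d u b i 0) := by
      ext i j
      rcases Fin.eq_zero_or_eq_succ j with rfl | ⟨j', rfl⟩
      · induction i using Fin.lastCases with
        | last => simp [liftedMat, Matrix.updateCol_apply]
        | cast i' => simp [liftedMat, Matrix.updateCol_apply, hvu, PiLp.neg_apply]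
      · induction i using Fin.lastCases <;>
          simp [liftedMat, Matrix.updateCol_apply, Fin.succ_ne_zero]
    rw [h1, Matrix.det_updateCol_smul, Matrix.updateCol_eq_self]
    ring
  -- continuity
  have hcont : Continuous fun t => (liftedMat d v (c t)).det := by
    apply Continuous.matrix_det
    apply continuous_matrix
    intro i j
    induction i using Fin.lastCases with
    | last =>
      induction j using Fin.cases with
      | zero => simpa [liftedMat] using continuous_const
      | succ j' => simpa [liftedMat] using continuous_const
    | cast i' =>
      induction j using Fin.cases with
      | zero => simpa [liftedMat] using continuous_const
      | succ j' =>
        simp only [liftedMat, Matrix.of_apply, Fin.lastCases_castSucc, Fin.cases_succ, hc,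
          PiLp.add_apply, PiLp.smul_apply, smul_eq_mul]
        fun_prop
  -- IVT
  have h0lt : (0:ℝ) < (liftedMat d v (c 0)).det := by rw [hc0]; exact hv3
  have h1lt : (liftedMat d v (c 1)).det < 0 := by rw [hc1, hneg]; linarith
  obtain ⟨t, htI, hFt⟩ :=
    intermediate_value_Icc' (by norm_num : (0:ℝ) ≤ 1) hcont.continuousOn ⟨h1lt.le, h0lt.le⟩
  -- membership
  have hmem : ∀ i, c t i ∈ convexHull ℝ (K i) := by
    intro i
    exact (convex_convexHull ℝ (K i)) (subset_convexHull ℝ (K i) (ha i))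
      (subset_convexHull ℝ (K i) (hb i)) (by linarith [htI.2]) htI.1 (by ring)
  -- affine independence
  have haff : AffineIndependent ℝ (c t) := by
    have h := hws Finset.univ (by simp) (c t) (fun i _ => hmem i)
    exact (affineIndependent_equiv (Equiv.subtypeUnivEquiv (fun i => Finset.mem_univ i))).mp h
  -- null vector
  obtain ⟨x, hx0, hxM⟩ := Matrix.exists_mulVec_eq_zero_iff.mpr hFt
  have hrow : ∀ i : Fin (d+1), ∑ j, liftedMat d v (c t) i j * x j = 0 := by
    intro i
    have h := congrFun hxM i
    simpa [Matrix.mulVec, dotProduct] using h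
  have hlastrow : ∑ j : Fin d, x j.succ = 0 := by
    have h := hrow (Fin.last d)
    simpa [liftedMat, Fin.sum_univ_succ] using h
  have hcrow : ∀ i' : Fin d, v i' * x 0 + ∑ j : Fin d, c t j i' * x j.succ = 0 := by
    intro i'
    have h := hrow (Fin.castSucc i')
    simpa [liftedMat, Fin.sum_univ_succ] using h
  -- vector equation
  have hvec : x 0 • v + ∑ j : Fin d, x j.succ • c t j = 0 := by
    ext i'
    have h := hcrow i'
    have hsum : (∑ j : Fin d, x j.succ • c t j) i' = ∑ j : Fin d, x j.succ * c t j i' := by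
      rw [WithLp.ofLp_sum]
      exact Finset.sum_apply i' Finset.univ fun j => (x j.succ • c t j).ofLp
    have h2 : ∑ j : Fin d, x j.succ * c t j i' = ∑ j : Fin d, c t j i' * x j.succ := by
      simp_rw [mul_comm]
    simp only [PiLp.add_apply, PiLp.smul_apply, smul_eq_mul, PiLp.zero_apply, hsum, h2]
    linarith [h]
  -- inner products with v constant over j
  have hbv : ∀ i j, (inner ℝ (b i - b j) v : ℝ) = 0 := by
    intro i j
    rw [hvu, inner_neg_right, hu2 i j, neg_zero]
  have hconst : ∀ j : Fin d, (inner ℝ (c t j) v : ℝ) = inner ℝ (c t 0) v := by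
    intro j
    have hsub : c t j - c t 0 = (1 - t) • (a j - a 0) + t • (b j - b 0) := by
      simp only [hc, smul_sub]
      abel
    have h1 : (inner ℝ (c t j - c t 0) v : ℝ) = 0 := by
      rw [hsub, inner_add_left, real_inner_smul_left, real_inner_smul_left, hv2 j 0, hbv j 0]
      ring
    rw [inner_sub_left] at h1
    linarith
  -- x 0 = 0
  have hx00 : x 0 = 0 := by
    have h0 : (inner ℝ (x 0 • v + ∑ j : Fin d, x j.succ • c t j) v : ℝ) = 0 := by
      rw [hvec, inner_zero_left]
    rw [inner_add_left, real_inner_smul_left, sum_inner] at h0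
    have hv11 : (inner ℝ v v : ℝ) = 1 := by
      rw [real_inner_self_eq_norm_sq, hv1]; norm_num
    have hs : (∑ j : Fin d, (inner ℝ (x j.succ • c t j) v : ℝ))
        = (inner ℝ (c t 0) v : ℝ) * ∑ j : Fin d, x j.succ := by
      rw [Finset.mul_sum]
      apply Finset.sum_congr rfl
      intro j _
      rw [real_inner_smul_left, hconst j]
      ring
    rw [hs, hlastrow, hv11] at h0
    linarith
  -- conclude all of x is zero
  have hallzero : ∀ j : Fin d, x j.succ = 0 := by
    have hvec0 : ∑ j : Fin d, x j.succ • c t j = 0 := by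
      rw [hx00, zero_smul, zero_add] at hvec
      exact hvec
    exact fun j => affineIndependent_iff.mp haff Finset.univ (fun j => x j.succ)
      hlastrow hvec0 j (Finset.mem_univ j)
  apply hx0
  funext j
  rcases Fin.eq_zero_or_eq_succ j with rfl | ⟨j', rfl⟩
  · exact hx00
  · exact hallzero j'
end
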